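/- In the degree-reduction graph H constructed from G and k with budget b = k(k-1)/2: if G has no k-clique, then for every A* ⊆ E with |A*| ≤ b, fewer than k nodes of (V', E' ∪ A*) have degree strictly greater than deg(v_e). -/

import Mathlib

set_option linter.unusedSectionVars false
set_option linter.unusedVariables false


/-- Vertex type of the degree-reduction graph `H`: evader `v_e`, original nodes of `V`,
pendant nodes `x_{i,j}` (one for each unit of degree of each original node), and
pendant nodes `z_1, ..., z_{k-2}`. -/
abbrev HVert {V : Type*} [Fintype V] (G : SimpleGraph V) [DecidableRel G.Adj] (k : ℕ) :=
  Unit ⊕ V ⊕ (Σ v : V, Fin (G.degree v)) ⊕ Fin (k - 2)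

/-- The degree-reduction graph `H`: `v_e` is adjacent to every original node and to the
`k-2` pendants `z_i`; each original node `v` is adjacent to its `|N_G(v)|` pendants
`x_{v,j}`; and the edges among original nodes are the complement of the edges of `G`. -/
def Hgraph {V : Type*} [Fintype V] (G : SimpleGraph V) [DecidableRel G.Adj] (k : ℕ) :
    SimpleGraph (HVert G k) :=
  SimpleGraph.fromRel (fun a b =>
    match a, b with
    | Sum.inl _, Sum.inr (Sum.inl _) => True
    | Sum.inr (Sum.inl v), Sum.inr (Sum.inr (Sum.inl ⟨w, _⟩)) => v = w
    | Sum.inl _, Sum.inr (Sum.inr (Sum.inr _)) => True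
    | Sum.inr (Sum.inl v), Sum.inr (Sum.inl w) => ¬ G.Adj v w
    | _, _ => False)


/-- The embedding of the original vertex set `V` into the vertices of `H`. -/
def origEmb {V : Type*} [Fintype V] (G : SimpleGraph V) [DecidableRel G.Adj] (k : ℕ) :
    V ↪ HVert G k :=
  ⟨fun v => Sum.inr (Sum.inl v), fun a b h => by simpa using h⟩

@[simp] private theorem origEmb_apply {V : Type*} [Fintype V] (G : SimpleGraph V) [DecidableRel G.Adj]
    (k : ℕ) (v : V) : origEmb G k v = Sum.inr (Sum.inl v) := rfl

section Aux

variable {V : Type*} [Fintype V] [DecidableEq V]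

private theorem comb_lemma (G : SimpleGraph V) (k : ℕ) (hk : 2 ≤ k)
    (hnoclique : ¬ ∃ s : Finset V, s.card = k ∧ G.IsClique ↑s)
    (A : SimpleGraph V) [DecidableRel A.Adj] (hAG : A ≤ G)
    (hcard : A.edgeFinset.card ≤ k * (k - 1) / 2) :
    (Finset.univ.filter (fun v => k - 1 ≤ A.degree v)).card < k := by
  by_contra h
  push_neg at h
  obtain ⟨s, hs_sub, hs_card⟩ := Finset.exists_subset_card_eq h
  have hdeg : ∀ v ∈ s, k - 1 ≤ A.degree v := by
    intro v hv
    have := hs_sub hv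
    simpa using this
  have hsum_all : ∑ v, A.degree v = 2 * A.edgeFinset.card :=
    SimpleGraph.sum_degrees_eq_twice_card_edges A
  have h2 : 2 * A.edgeFinset.card ≤ k * (k - 1) := by
    calc 2 * A.edgeFinset.card ≤ 2 * (k * (k - 1) / 2) := by omega
    _ ≤ k * (k - 1) := Nat.mul_div_le _ 2
  have hsum_s_ge : k * (k - 1) ≤ ∑ v ∈ s, A.degree v := by
    calc k * (k - 1) = ∑ _v ∈ s, (k - 1) := by rw [Finset.sum_const, hs_card, smul_eq_mul]
    _ ≤ ∑ v ∈ s, A.degree v := Finset.sum_le_sum hdeg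
  have hsum_split : ∑ v ∈ s, A.degree v + ∑ v ∈ sᶜ, A.degree v = ∑ v, A.degree v := by
    rw [Finset.sum_add_sum_compl]
  have hout : ∀ v ∈ sᶜ, A.degree v = 0 := by
    intro v hv
    by_contra hne
    have h1 : 1 ≤ ∑ v ∈ sᶜ, A.degree v :=
      Finset.single_le_sum (f := fun v => A.degree v) (fun _ _ => Nat.zero_le _) hv |>.trans' (by omega)
    omega
  have hsum_s_eq : ∑ v ∈ s, A.degree v = k * (k - 1) := by omega
  have hdeg_eq : ∀ v ∈ s, A.degree v = k - 1 := by
    intro v hv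
    by_contra hne
    have hgt : k - 1 < A.degree v := lt_of_le_of_ne (hdeg v hv) (Ne.symm hne)
    have : ∑ w ∈ s, A.degree w > k * (k - 1) := by
      calc k * (k-1) = ∑ _w ∈ s, (k - 1) := by rw [Finset.sum_const, hs_card, smul_eq_mul]
      _ < ∑ w ∈ s, A.degree w := by
          apply Finset.sum_lt_sum hdeg ⟨v, hv, hgt⟩
    omega
  have hnbr : ∀ v ∈ s, A.neighborFinset v = s.erase v := by
    intro v hv
    apply Finset.eq_of_subset_of_card_le
    · intro w hw
      rw [SimpleGraph.mem_neighborFinset] at hw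
      have hws : w ∈ s := by
        by_contra hws
        have hdw : A.degree w = 0 := hout w (by simpa using hws)
        have hvw : v ∈ A.neighborFinset w := by
          rw [SimpleGraph.mem_neighborFinset]; exact hw.symm
        have : 1 ≤ A.degree w := Finset.card_pos.mpr ⟨v, hvw⟩
        omega
      exact Finset.mem_erase.mpr ⟨(A.ne_of_adj hw).symm, hws⟩
    · rw [Finset.card_erase_of_mem hv, hs_card]
      have := hdeg_eq v hv
      unfold SimpleGraph.degree at this
      omega
  apply hnoclique
  refine ⟨s, hs_card, ?_⟩
  intro v hv w hw hvw
  simp only [Finset.mem_coe] at hv hw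
  have : w ∈ A.neighborFinset v := by
    rw [hnbr v hv]; exact Finset.mem_erase.mpr ⟨Ne.symm hvw, hw⟩
  exact hAG (by rwa [SimpleGraph.mem_neighborFinset] at this)

variable (G : SimpleGraph V) [DecidableRel G.Adj] (k : ℕ) (A : SimpleGraph V)

private theorem nbr_inl :
    ((Hgraph G k ⊔ A.map (origEmb G k)).neighborSet (Sum.inl ())) =
      Set.range (fun v : V => (Sum.inr (Sum.inl v) : HVert G k)) ∪
      Set.range (fun i : Fin (k-2) => (Sum.inr (Sum.inr (Sum.inr i)) : HVert G k)) := by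
  ext x
  rcases x with _ | (v | (⟨w,j⟩ | i)) <;>
    simp [Hgraph, origEmb_apply, SimpleGraph.fromRel_adj, SimpleGraph.map_adj]

private theorem nbr_x (v : V) (j : Fin (G.degree v)) :
    ((Hgraph G k ⊔ A.map (origEmb G k)).neighborSet
        (Sum.inr (Sum.inr (Sum.inl ⟨v, j⟩)))) = {Sum.inr (Sum.inl v)} := by
  ext x
  rcases x with _ | (w | (⟨u,i⟩ | i)) <;>
    simp [Hgraph, origEmb_apply, SimpleGraph.fromRel_adj, SimpleGraph.map_adj, eq_comm]

private theorem nbr_z (i : Fin (k - 2)) :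
    ((Hgraph G k ⊔ A.map (origEmb G k)).neighborSet
        (Sum.inr (Sum.inr (Sum.inr i)))) = {Sum.inl ()} := by
  ext x
  rcases x with _ | (w | (⟨u,i'⟩ | i')) <;>
    simp [Hgraph, origEmb_apply, SimpleGraph.fromRel_adj, SimpleGraph.map_adj]

private theorem nbr_v (hAG : A ≤ G) (v : V) :
    ((Hgraph G k ⊔ A.map (origEmb G k)).neighborSet (Sum.inr (Sum.inl v))) =
      {(Sum.inl () : HVert G k)} ∪
      (fun w : V => (Sum.inr (Sum.inl w) : HVert G k)) ''
        ({w | w ≠ v ∧ ¬ G.Adj v w} ∪ A.neighborSet v) ∪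
      Set.range (fun j : Fin (G.degree v) =>
        (Sum.inr (Sum.inr (Sum.inl ⟨v, j⟩)) : HVert G k)) := by
  ext x
  rcases x with _ | (w | (⟨u,i⟩ | i))
  · simp [Hgraph, origEmb_apply, SimpleGraph.fromRel_adj, SimpleGraph.map_adj]
  · simp [Hgraph, origEmb_apply, SimpleGraph.fromRel_adj, SimpleGraph.map_adj, eq_comm]
    rw [G.adj_comm w v]; tauto
  · simp [Hgraph, origEmb_apply, SimpleGraph.fromRel_adj, SimpleGraph.map_adj, eq_comm]
    rintro rfl
    exact ⟨i, HEq.rfl⟩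
  · simp [Hgraph, origEmb_apply, SimpleGraph.fromRel_adj, SimpleGraph.map_adj]

end Aux
section Aux2
variable {V : Type*} [Fintype V] [DecidableEq V]
  (G : SimpleGraph V) [DecidableRel G.Adj] (k : ℕ) (A : SimpleGraph V)

private theorem f_inj : Function.Injective (fun v : V => (Sum.inr (Sum.inl v) : HVert G k)) :=
  fun a b h => by simpa using h

private theorem ncard_inl :
    ((Hgraph G k ⊔ A.map (origEmb G k)).neighborSet (Sum.inl ())).ncard =
      Fintype.card V + (k - 2) := by
  rw [nbr_inl, Set.ncard_union_eq ?disj (Set.toFinite _) (Set.toFinite _)]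
  · rw [← Nat.card_coe_set_eq, ← Nat.card_coe_set_eq,
      Nat.card_range_of_injective (f_inj G k),
      Nat.card_range_of_injective (fun a b h => by simpa using h : Function.Injective
        (fun i : Fin (k-2) => (Sum.inr (Sum.inr (Sum.inr i)) : HVert G k)))]
    simp [Nat.card_eq_fintype_card]
  case disj =>
    rw [Set.disjoint_left]
    rintro x ⟨v, rfl⟩ ⟨i, h⟩
    simp at h

private theorem ncard_nbhd [DecidableRel A.Adj] (v : V) :
    (A.neighborSet v).ncard = A.degree v := by
  rw [SimpleGraph.degree, SimpleGraph.neighborFinset, Set.ncard_eq_toFinset_card']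

private theorem ncard_v (hAG : A ≤ G) (v : V) :
    ((Hgraph G k ⊔ A.map (origEmb G k)).neighborSet (Sum.inr (Sum.inl v))).ncard =
      Fintype.card V + (A.neighborSet v).ncard := by
  classical
  rw [nbr_v G k A hAG v]
  have hTN : Disjoint {w : V | w ≠ v ∧ ¬ G.Adj v w} (A.neighborSet v) := by
    rw [Set.disjoint_left]
    rintro w ⟨hne, hnadj⟩ hw
    exact hnadj (hAG hw)
  have h1 : Disjoint ({(Sum.inl () : HVert G k)}) ((fun w : V => (Sum.inr (Sum.inl w) : HVert G k)) ''
        ({w | w ≠ v ∧ ¬ G.Adj v w} ∪ A.neighborSet v)) := by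
    rw [Set.disjoint_left]
    rintro x rfl ⟨w, _, h⟩
    simp at h
  have h2 : Disjoint ({(Sum.inl () : HVert G k)} ∪ (fun w : V => (Sum.inr (Sum.inl w) : HVert G k)) ''
        ({w | w ≠ v ∧ ¬ G.Adj v w} ∪ A.neighborSet v))
      (Set.range (fun j : Fin (G.degree v) =>
        (Sum.inr (Sum.inr (Sum.inl ⟨v, j⟩)) : HVert G k))) := by
    rw [Set.disjoint_left]
    rintro x (rfl | ⟨w, _, rfl⟩) ⟨j, h⟩ <;> simp at h
  have hr : (Set.range fun j : Fin (G.degree v) =>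
      (Sum.inr (Sum.inr (Sum.inl ⟨v, j⟩)) : HVert G k)).ncard = G.degree v := by
    rw [← Nat.card_coe_set_eq,
      Nat.card_range_of_injective (fun a b h => by
        simpa using h : Function.Injective (fun j : Fin (G.degree v) =>
          (Sum.inr (Sum.inr (Sum.inl ⟨v, j⟩)) : HVert G k))),
      Nat.card_eq_fintype_card, Fintype.card_fin]
  rw [Set.ncard_union_eq h2 (Set.toFinite _) (Set.toFinite _),
    Set.ncard_union_eq h1 (Set.toFinite _) (Set.toFinite _),
    Set.ncard_image_of_injective _ (f_inj G k),
    Set.ncard_union_eq hTN (Set.toFinite _) (Set.toFinite _),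
    Set.ncard_singleton, hr]
  have hcompl : {w : V | w ≠ v ∧ ¬ G.Adj v w} = ({v} ∪ G.neighborSet v)ᶜ := by
    ext w
    simp [not_or, and_comm, eq_comm]
  have hsplit : ({v} ∪ G.neighborSet v : Set V).ncard + ({v} ∪ G.neighborSet v : Set V)ᶜ.ncard
      = Fintype.card V := by
    rw [Set.ncard_add_ncard_compl, Nat.card_eq_fintype_card]
  have hvd : Disjoint ({v} : Set V) (G.neighborSet v) := by
    rw [Set.disjoint_left]
    rintro x rfl hx
    exact G.irrefl hx
  rw [Set.ncard_union_eq hvd (Set.toFinite _) (Set.toFinite _), Set.ncard_singleton,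
    ncard_nbhd G v] at hsplit
  rw [hcompl]
  omega

private theorem ncard_x (v : V) (j : Fin (G.degree v)) :
    ((Hgraph G k ⊔ A.map (origEmb G k)).neighborSet
        (Sum.inr (Sum.inr (Sum.inl ⟨v, j⟩)))).ncard = 1 := by
  rw [nbr_x, Set.ncard_singleton]

private theorem ncard_z (i : Fin (k - 2)) :
    ((Hgraph G k ⊔ A.map (origEmb G k)).neighborSet
        (Sum.inr (Sum.inr (Sum.inr i)))).ncard = 1 := by
  rw [nbr_z, Set.ncard_singleton]
end Aux2

/-- If `G` has no `k`-clique, then for every set `A* ⊆ E(G)` of at most `k(k-1)/2`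
added edges, fewer than `k` nodes of the resulting graph `H ∪ A*` have degree strictly
greater than the degree of `v_e`. -/
theorem no_clique_implies_few_exceed {V : Type*} [Fintype V] [DecidableEq V]
    (G : SimpleGraph V) [DecidableRel G.Adj] (k : ℕ) (hk : 2 ≤ k)
    (hnoclique : ¬ ∃ s : Finset V, s.card = k ∧ G.IsClique ↑s) :
    ∀ A : SimpleGraph V, A ≤ G → A.edgeSet.ncard ≤ k * (k - 1) / 2 →
      {x : HVert G k |
        (((Hgraph G k) ⊔ A.map (origEmb G k)).neighborSet (Sum.inl ())).ncard <
        (((Hgraph G k) ⊔ A.map (origEmb G k)).neighborSet x).ncard}.ncard < k := by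
  intro A hAG hAcard
  classical
  have hsub : {x : HVert G k |
        (((Hgraph G k) ⊔ A.map (origEmb G k)).neighborSet (Sum.inl ())).ncard <
        (((Hgraph G k) ⊔ A.map (origEmb G k)).neighborSet x).ncard} ⊆
      (fun v : V => (Sum.inr (Sum.inl v) : HVert G k)) ''
        {v : V | k - 1 ≤ (A.neighborSet v).ncard} := by
    rintro (_ | (v | (⟨w,j⟩ | i))) hx <;>
      rw [Set.mem_setOf_eq, ncard_inl] at hx
    · omega
    · rw [ncard_v G k A hAG v] at hx
      exact ⟨v, by simp only [Set.mem_setOf_eq]; omega, rfl⟩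
    · rw [ncard_x] at hx
      have : 1 ≤ Fintype.card V := Fintype.card_pos_iff.mpr ⟨w⟩
      omega
    · rw [ncard_z] at hx
      have := i.isLt
      omega
  calc {x : HVert G k |
        (((Hgraph G k) ⊔ A.map (origEmb G k)).neighborSet (Sum.inl ())).ncard <
        (((Hgraph G k) ⊔ A.map (origEmb G k)).neighborSet x).ncard}.ncard
      ≤ ((fun v : V => (Sum.inr (Sum.inl v) : HVert G k)) ''
          {v : V | k - 1 ≤ (A.neighborSet v).ncard}).ncard :=
        Set.ncard_le_ncard hsub (Set.toFinite _)
    _ = {v : V | k - 1 ≤ (A.neighborSet v).ncard}.ncard :=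
        Set.ncard_image_of_injective _ (f_inj G k)
    _ = (Finset.univ.filter (fun v => k - 1 ≤ A.degree v)).card := by
        rw [← Set.ncard_coe_finset]
        congr 1
        ext v
        simp [ncard_nbhd]
    _ < k := by
        apply comb_lemma G k hk hnoclique A hAG
        rwa [SimpleGraph.edgeFinset, ← Set.ncard_eq_toFinset_card']
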